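/- Let A be a multiset of positive integers in which 1 occurs exactly once and each positive integer j occurs at most j times. Then f_{A,a}(5)·f_{A,b}(5) > f_{A,a+b}(5) for all positive integers a, b with a + b > 2, and f_{A,1}(5)² ≥ f_{A,2}(5) with equality if and only if 2 occurs exactly twice in A. -/

import Mathlib

open scoped Classical

/-- Sum of those divisors of `j` that belong to the multiset of positive integers
with multiplicity function `μ`, counted with multiplicity: `σ_A(j) = ∑_{d ∣ j} d·μ(d)`. -/
noncomputable def sigmaA (μ : ℕ → ℕ) (j : ℕ) : ℕ := ∑ d ∈ Nat.divisors j, d * μ d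

/-- The polynomials `f_{A,n}(x)` associated with the multiset of positive integers
with multiplicity function `μ`, defined (equivalently to the generating function
`∑ f_{A,n}(x) qⁿ = ∏_{a∈A} (1/(1-q^a))^x`) by `f_{A,0} = 1` and the recurrence
`f_{A,n}(x) = (x/n) ∑_{j=1}^{n} σ_A(j) f_{A,n-j}(x)`. -/
noncomputable def fA (μ : ℕ → ℕ) : ℕ → ℝ → ℝ
  | 0, _ => 1
  | n + 1, x =>
      x / (n + 1) * ∑ j ∈ Finset.range (n + 1), (sigmaA μ (j + 1) : ℝ) * fA μ (n - j) x
  decreasing_by exact Nat.lt_succ_of_le (Nat.sub_le n j)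

/-- `f_{A,n}(x)` for an ordinary set `A` of positive integers. -/
noncomputable def fS (A : Set ℕ) : ℕ → ℝ → ℝ := fA (fun a => if a ∈ A then 1 else 0)

open Finset

lemma fA_zero (μ : ℕ → ℕ) (x : ℝ) : fA μ 0 x = 1 := by rw [fA]

lemma fA_succ (μ : ℕ → ℕ) (n : ℕ) (x : ℝ) :
    fA μ (n+1) x = x / (n + 1) * ∑ j ∈ Finset.range (n + 1), (sigmaA μ (j + 1) : ℝ) * fA μ (n - j) x := by
  rw [fA]

/-- the clean recurrence -/
lemma fA_rec (μ : ℕ → ℕ) (b : ℕ) (hb : 1 ≤ b) :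
    (b : ℝ) * fA μ b 5 = 5 * ∑ j ∈ Finset.range b, (sigmaA μ (j + 1) : ℝ) * fA μ (b - 1 - j) 5 := by
  obtain ⟨m, rfl⟩ : ∃ m, b = m + 1 := ⟨b - 1, by omega⟩
  rw [fA_succ]
  have h1 : ((m:ℝ) + 1) ≠ 0 := by positivity
  have h2 : ∀ j, m + 1 - 1 - j = m - j := fun j => by omega
  have h3 : (∑ j ∈ Finset.range (m+1), (sigmaA μ (j + 1) : ℝ) * fA μ (m + 1 - 1 - j) 5)
      = ∑ j ∈ Finset.range (m+1), (sigmaA μ (j + 1) : ℝ) * fA μ (m - j) 5 :=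
    Finset.sum_congr rfl fun j _ => by rw [h2 j]
  rw [h3]
  push_cast
  field_simp

lemma sigma_ge_one (μ : ℕ → ℕ) (hμ1 : μ 1 = 1) (m : ℕ) (hm : 1 ≤ m) : 1 ≤ sigmaA μ m := by
  have h1 : 1 ∈ Nat.divisors m := Nat.one_mem_divisors.2 (by omega)
  calc 1 = 1 * μ 1 := by rw [hμ1]
    _ ≤ sigmaA μ m := Finset.single_le_sum (f := fun d => d * μ d) (fun d _ => Nat.zero_le _) h1

lemma sigma_ge_one' (μ : ℕ → ℕ) (hμ1 : μ 1 = 1) (m : ℕ) (hm : 1 ≤ m) : (1:ℝ) ≤ (sigmaA μ m : ℝ) := by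
  exact_mod_cast sigma_ge_one μ hμ1 m hm

lemma sigma_nonneg (μ : ℕ → ℕ) (m : ℕ) : (0:ℝ) ≤ (sigmaA μ m : ℝ) := Nat.cast_nonneg _

lemma sigma_le_sig2 (μ : ℕ → ℕ) (hμ : ∀ j, μ j ≤ j) (m : ℕ) :
    sigmaA μ m ≤ ∑ d ∈ Nat.divisors m, d * d :=
  Finset.sum_le_sum fun d _ => Nat.mul_le_mul_left d (hμ d)

lemma sigma_num (μ : ℕ → ℕ) (hμ : ∀ j, μ j ≤ j) (m c : ℕ)
    (h : ∑ d ∈ Nat.divisors m, d * d = c) : (sigmaA μ m : ℝ) ≤ (c:ℝ) := by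
  exact_mod_cast h ▸ sigma_le_sig2 μ hμ m

/-- polynomial lower bound: SL n = C(n+4,4) -/
noncomputable def SL (n : ℕ) : ℝ := ((n:ℝ)+1)*((n:ℝ)+2)*((n:ℝ)+3)*((n:ℝ)+4)/24

lemma SL_pos (n : ℕ) : 0 < SL n := by unfold SL; positivity

lemma SL_sum (n : ℕ) :
    ∑ i ∈ Finset.range (n+1), SL i = ((n:ℝ)+1)*((n:ℝ)+2)*((n:ℝ)+3)*((n:ℝ)+4)*((n:ℝ)+5)/120 := by
  induction n with
  | zero => simp [SL]; norm_num
  | succ m ih =>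
    rw [Finset.sum_range_succ, ih]
    unfold SL
    push_cast
    ring

lemma fA_ge_SL (μ : ℕ → ℕ) (hμ1 : μ 1 = 1) : ∀ n, SL n ≤ fA μ n 5 := by
  intro n
  induction n using Nat.strong_induction_on with
  | _ n IH =>
    match n with
    | 0 => rw [fA_zero]; unfold SL; norm_num
    | Nat.succ m =>
      have hrec := fA_rec μ (m+1) (by omega)
      have hterm : ∀ j ∈ Finset.range (m+1), SL (m - j) ≤ (sigmaA μ (j+1) : ℝ) * fA μ (m+1-1-j) 5 := by
        intro j hj
        have h2 : m + 1 - 1 - j = m - j := by omega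
        rw [h2]
        have hS := IH (m - j) (by omega)
        have hs := sigma_ge_one' μ hμ1 (j+1) (by omega)
        nlinarith [SL_pos (m - j)]
      have hsum : ∑ j ∈ Finset.range (m+1), SL (m - j) ≤ ∑ j ∈ Finset.range (m+1), (sigmaA μ (j+1) : ℝ) * fA μ (m+1-1-j) 5 :=
        Finset.sum_le_sum hterm
      have hrefl : ∑ j ∈ Finset.range (m+1), SL (m - j) = ∑ i ∈ Finset.range (m+1), SL i := by
        have := Finset.sum_range_reflect (fun i => SL i) (m+1)
        simpa using this
      have hSLsum := SL_sum m
      have key : ((m:ℝ)+1) * SL (m+1) ≤ ((m:ℝ)+1) * fA μ (m+1) 5 := by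
        have hLHS : ((m:ℝ)+1) * SL (m+1) = 5 * (((m:ℝ)+1)*((m:ℝ)+2)*((m:ℝ)+3)*((m:ℝ)+4)*((m:ℝ)+5)/120) := by
          unfold SL; push_cast; ring
        rw [hLHS, ← hSLsum]
        calc 5 * ∑ i ∈ Finset.range (m+1), SL i = 5 * ∑ j ∈ Finset.range (m+1), SL (m - j) := by rw [hrefl]
          _ ≤ 5 * ∑ j ∈ Finset.range (m+1), (sigmaA μ (j+1) : ℝ) * fA μ (m+1-1-j) 5 := by linarith
          _ = ((m+1:ℕ):ℝ) * fA μ (m+1) 5 := hrec.symm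
          _ = ((m:ℝ)+1) * fA μ (m+1) 5 := by push_cast; ring
      have hm1 : (0:ℝ) < (m:ℝ)+1 := by positivity
      exact le_of_mul_le_mul_left key hm1

lemma fA_pos (μ : ℕ → ℕ) (hμ1 : μ 1 = 1) (n : ℕ) : 0 < fA μ n 5 :=
  lt_of_lt_of_le (SL_pos n) (fA_ge_SL μ hμ1 n)

lemma sum_fA_le (μ : ℕ → ℕ) (hμ1 : μ 1 = 1) (n : ℕ) (hn : 1 ≤ n) :
    5 * ∑ i ∈ Finset.range n, fA μ i 5 ≤ (n:ℝ) * fA μ n 5 := by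
  rw [fA_rec μ n hn]
  have : ∑ i ∈ Finset.range n, fA μ i 5 = ∑ j ∈ Finset.range n, fA μ (n-1-j) 5 := by
    have := Finset.sum_range_reflect (fun i => fA μ i 5) n
    simpa using this.symm
  rw [this]
  have hterm : ∀ j ∈ Finset.range n, fA μ (n-1-j) 5 ≤ (sigmaA μ (j+1) : ℝ) * fA μ (n-1-j) 5 := by
    intro j hj
    have hs := sigma_ge_one' μ hμ1 (j+1) (by omega)
    nlinarith [fA_pos μ hμ1 (n-1-j)]
  have := Finset.sum_le_sum hterm
  linarith
lemma basel : ∀ m : ℕ, 1 ≤ m → ∑ d ∈ Finset.Icc 1 m, (1:ℝ)/(d:ℝ)^2 ≤ 2 - 1/(m:ℝ) := by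
  intro m hm
  induction m with
  | zero => omega
  | succ k ih =>
    rcases Nat.eq_or_lt_of_le hm with h | h
    · simp [← h]
      norm_num
    · have hk : 1 ≤ k := by omega
      have := ih hk
      rw [Finset.sum_Icc_succ_top (by omega : 1 ≤ k + 1)]
      have hk0 : (0:ℝ) < (k:ℝ) := by exact_mod_cast hk
      have h1 : (1:ℝ)/((k:ℝ)+1)^2 ≤ 1/(k:ℝ) - 1/((k:ℝ)+1) := by
        rw [div_sub_div _ _ (ne_of_gt hk0) (by positivity)]
        rw [div_le_div_iff₀ (by positivity) (by positivity)]
        ring_nf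
        nlinarith
      push_cast
      push_cast at this
      linarith

lemma sig2_le_two_sq (m : ℕ) (hm : 1 ≤ m) :
    ((∑ d ∈ Nat.divisors m, d * d : ℕ) : ℝ) ≤ 2 * (m:ℝ)^2 := by
  have hrefl : (∑ d ∈ Nat.divisors m, (m / d) * (m / d)) = ∑ d ∈ Nat.divisors m, d * d :=
    Nat.sum_div_divisors m (fun d => d * d)
  rw [← hrefl]
  push_cast
  have hstep : ∀ d ∈ Nat.divisors m, ((m / d : ℕ) : ℝ) * ((m / d : ℕ) : ℝ) ≤ (m:ℝ)^2 * (1/(d:ℝ)^2) := by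
    intro d hd
    obtain ⟨hdvd, hm0⟩ := Nat.mem_divisors.1 hd
    have hd0 : 0 < d := Nat.pos_of_dvd_of_pos hdvd (by omega)
    have : ((m / d : ℕ) : ℝ) = (m:ℝ)/(d:ℝ) := by
      rw [Nat.cast_div hdvd (by exact_mod_cast hd0.ne')]
    rw [this]
    have hd0' : (0:ℝ) < (d:ℝ) := by exact_mod_cast hd0
    have heq : (m:ℝ)/(d:ℝ) * ((m:ℝ)/(d:ℝ)) = (m:ℝ)^2 * (1/(d:ℝ)^2) := by
      field_simp
    exact le_of_eq heq
  calc (∑ d ∈ Nat.divisors m, ((m / d : ℕ) : ℝ) * ((m / d : ℕ) : ℝ))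
      ≤ ∑ d ∈ Nat.divisors m, (m:ℝ)^2 * (1/(d:ℝ)^2) := Finset.sum_le_sum hstep
    _ = (m:ℝ)^2 * ∑ d ∈ Nat.divisors m, (1:ℝ)/(d:ℝ)^2 := by rw [Finset.mul_sum]
    _ ≤ (m:ℝ)^2 * ∑ d ∈ Finset.Icc 1 m, (1:ℝ)/(d:ℝ)^2 := by
        refine mul_le_mul_of_nonneg_left (Finset.sum_le_sum_of_subset_of_nonneg ?_ ?_) (by positivity)
        · intro d hd
          obtain ⟨hdvd, _⟩ := Nat.mem_divisors.1 hd
          exact Finset.mem_Icc.2 ⟨Nat.pos_of_dvd_of_pos hdvd (by omega), Nat.le_of_dvd (by omega) hdvd⟩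
        · intro d _ _; positivity
    _ ≤ (m:ℝ)^2 * (2 - 1/(m:ℝ)) := by
        refine mul_le_mul_of_nonneg_left (basel m hm) (by positivity)
    _ ≤ 2 * (m:ℝ)^2 := by
        have : (0:ℝ) < (m:ℝ) := by exact_mod_cast hm
        have h1 : 0 < 1/(m:ℝ) := by positivity
        nlinarith

lemma sigma_le_two_sq (μ : ℕ → ℕ) (hμ : ∀ j, μ j ≤ j) (m : ℕ) (hm : 1 ≤ m) :
    (sigmaA μ m : ℝ) ≤ 2 * (m:ℝ)^2 := by
  refine le_trans ?_ (sig2_le_two_sq m hm)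
  exact_mod_cast sigma_le_sig2 μ hμ m

lemma SL_gt_8sq (b : ℕ) (hb : 9 ≤ b) : 8 * (b:ℝ)^2 < SL b := by
  have hb' : (9:ℝ) ≤ (b:ℝ) := by exact_mod_cast hb
  unfold SL
  rw [lt_div_iff₀ (by norm_num)]
  nlinarith [sq_nonneg ((b:ℝ) - 9), sq_nonneg (b:ℝ)]

/-- generic tail bound given per-term domination -/
lemma tail_bound (μ : ℕ → ℕ) (hμ1 : μ 1 = 1) (a b : ℕ) (ha : 1 ≤ a)
    (hσ : ∀ m, b < m → m ≤ a + b → (sigmaA μ m : ℝ) < fA μ b 5) :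
    5 * ∑ i ∈ Finset.range a, (sigmaA μ (a + b - i) : ℝ) * fA μ i 5 < (a:ℝ) * fA μ a 5 * fA μ b 5 := by
  have h1 : ∑ i ∈ Finset.range a, (sigmaA μ (a + b - i) : ℝ) * fA μ i 5
      < ∑ i ∈ Finset.range a, fA μ b 5 * fA μ i 5 := by
    refine Finset.sum_lt_sum_of_nonempty ⟨0, Finset.mem_range.2 (by omega)⟩ ?_
    intro i hi
    have hi' := Finset.mem_range.1 hi
    have hσi := hσ (a + b - i) (by omega) (by omega)
    have := fA_pos μ hμ1 i
    nlinarith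
  have h2 : ∑ i ∈ Finset.range a, fA μ b 5 * fA μ i 5 = fA μ b 5 * ∑ i ∈ Finset.range a, fA μ i 5 := by
    rw [Finset.mul_sum]
  have h3 := sum_fA_le μ hμ1 a ha
  have hb5 := fA_pos μ hμ1 b
  have ha5 := fA_pos μ hμ1 a
  have h4 : fA μ b 5 * (5 * ∑ i ∈ Finset.range a, fA μ i 5) ≤ fA μ b 5 * ((a:ℝ) * fA μ a 5) :=
    mul_le_mul_of_nonneg_left h3 (le_of_lt hb5)
  nlinarith [Finset.sum_nonneg (fun i (_ : i ∈ Finset.range a) => (fA_pos μ hμ1 i).le)]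

/-- the induction step -/
lemma step (μ : ℕ → ℕ) (hμ1 : μ 1 = 1) (a b : ℕ) (ha : 1 ≤ a) (hb : 1 ≤ b)
    (hGE : ∀ k, k < b → fA μ a 5 * fA μ k 5 ≥ fA μ (a + k) 5)
    (htail : 5 * ∑ i ∈ Finset.range a, (sigmaA μ (a + b - i) : ℝ) * fA μ i 5 < (a:ℝ) * fA μ a 5 * fA μ b 5) :
    fA μ a 5 * fA μ b 5 > fA μ (a + b) 5 := by
  set n := a + b with hn
  have hrec := fA_rec μ n (by omega)
  -- split
  have hsplit : ∑ j ∈ Finset.range n, (sigmaA μ (j + 1) : ℝ) * fA μ (n - 1 - j) 5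
      = ∑ j ∈ Finset.range b, (sigmaA μ (j + 1) : ℝ) * fA μ (n - 1 - j) 5
        + ∑ j ∈ Finset.Ico b n, (sigmaA μ (j + 1) : ℝ) * fA μ (n - 1 - j) 5 := by
    rw [Finset.range_eq_Ico, ← Finset.sum_Ico_consecutive _ (Nat.zero_le b) (show b ≤ n by omega), ← Finset.range_eq_Ico]
  -- part A bound
  have hA : ∑ j ∈ Finset.range b, (sigmaA μ (j + 1) : ℝ) * fA μ (n - 1 - j) 5
      ≤ fA μ a 5 * ∑ j ∈ Finset.range b, (sigmaA μ (j + 1) : ℝ) * fA μ (b - 1 - j) 5 := by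
    rw [Finset.mul_sum]
    refine Finset.sum_le_sum ?_
    intro j hj
    have hj' := Finset.mem_range.1 hj
    have he : n - 1 - j = a + (b - 1 - j) := by omega
    rw [he]
    have := hGE (b - 1 - j) (by omega)
    have hs := sigma_nonneg μ (j+1)
    nlinarith
  have hrecb := fA_rec μ b hb
  -- part B: reindex
  have hB : ∑ j ∈ Finset.Ico b n, (sigmaA μ (j + 1) : ℝ) * fA μ (n - 1 - j) 5
      = ∑ i ∈ Finset.range a, (sigmaA μ (a + b - i) : ℝ) * fA μ i 5 := by
    rw [Finset.sum_Ico_eq_sum_range]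
    have hab : n - b = a := by omega
    rw [hab]
    have hcong : ∀ k ∈ Finset.range a,
        (sigmaA μ (b + k + 1) : ℝ) * fA μ (n - 1 - (b + k)) 5
          = (fun i => (sigmaA μ (a + b - i) : ℝ) * fA μ i 5) (a - 1 - k) := by
      intro k hk
      have hk' := Finset.mem_range.1 hk
      have e1 : a + b - (a - 1 - k) = b + k + 1 := by omega
      have e2 : n - 1 - (b + k) = a - 1 - k := by omega
      simp only [e1, e2]
    rw [Finset.sum_congr rfl hcong]
    exact Finset.sum_range_reflect (fun i => (sigmaA μ (a + b - i) : ℝ) * fA μ i 5) a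
  have hna : (0:ℝ) < (n:ℝ) := by positivity
  have key : (n:ℝ) * fA μ n 5 < (n:ℝ) * (fA μ a 5 * fA μ b 5) := by
    calc (n:ℝ) * fA μ n 5
        = 5 * (∑ j ∈ Finset.range b, (sigmaA μ (j + 1) : ℝ) * fA μ (n - 1 - j) 5
          + ∑ j ∈ Finset.Ico b n, (sigmaA μ (j + 1) : ℝ) * fA μ (n - 1 - j) 5) := by rw [hrec, hsplit]
      _ ≤ 5 * (fA μ a 5 * ∑ j ∈ Finset.range b, (sigmaA μ (j + 1) : ℝ) * fA μ (b - 1 - j) 5)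
          + 5 * ∑ i ∈ Finset.range a, (sigmaA μ (a + b - i) : ℝ) * fA μ i 5 := by
          rw [hB] at *
          linarith
      _ < fA μ a 5 * ((b:ℝ) * fA μ b 5) + (a:ℝ) * fA μ a 5 * fA μ b 5 := by
          rw [hrecb]
          linarith
      _ = (n:ℝ) * (fA μ a 5 * fA μ b 5) := by rw [hn]; push_cast; ring
  have := lt_of_mul_lt_mul_left key (le_of_lt hna)
  linarith
section small
variable (μ : ℕ → ℕ)

lemma sig1 (hμ1 : μ 1 = 1) : sigmaA μ 1 = 1 := by simp [sigmaA, hμ1]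

lemma sig2e : sigmaA μ 2 = μ 1 + 2 * μ 2 := by
  have hd : Nat.divisors 2 = {1, 2} := by decide
  rw [sigmaA, hd]
  simp [Finset.sum_insert, Finset.mem_insert]

lemma sig4e : sigmaA μ 4 = μ 1 + 2 * μ 2 + 4 * μ 4 := by
  have hd : Nat.divisors 4 = {1, 2, 4} := by decide
  rw [sigmaA, hd]
  simp [Finset.sum_insert, Finset.mem_insert]
  ring

lemma sig6e : sigmaA μ 6 = μ 1 + 2 * μ 2 + 3 * μ 3 + 6 * μ 6 := by
  have hd : Nat.divisors 6 = {1, 2, 3, 6} := by decide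
  rw [sigmaA, hd]
  simp [Finset.sum_insert, Finset.mem_insert]
  ring

lemma sig8e : sigmaA μ 8 = μ 1 + 2 * μ 2 + 4 * μ 4 + 8 * μ 8 := by
  have hd : Nat.divisors 8 = {1, 2, 4, 8} := by decide
  rw [sigmaA, hd]
  simp [Finset.sum_insert, Finset.mem_insert]
  ring

lemma sig10e : sigmaA μ 10 = μ 1 + 2 * μ 2 + 5 * μ 5 + 10 * μ 10 := by
  have hd : Nat.divisors 10 = {1, 2, 5, 10} := by decide
  rw [sigmaA, hd]
  simp [Finset.sum_insert, Finset.mem_insert]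
  ring

lemma sig12e : sigmaA μ 12 = μ 1 + 2 * μ 2 + 3 * μ 3 + 4 * μ 4 + 6 * μ 6 + 12 * μ 12 := by
  have hd : Nat.divisors 12 = {1, 2, 3, 4, 6, 12} := by decide
  rw [sigmaA, hd]
  simp [Finset.sum_insert, Finset.mem_insert]
  ring

lemma F1v (hμ1 : μ 1 = 1) : fA μ 1 5 = 5 := by
  have h := fA_succ μ 0 5
  norm_num [sig1 μ hμ1, fA_zero] at h
  exact h

lemma F2v (hμ1 : μ 1 = 1) : fA μ 2 5 = 5 / 2 * (5 + (sigmaA μ 2 : ℝ)) := by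
  have h := fA_succ μ 1 5
  norm_num [Finset.sum_range_succ, fA_zero, sig1 μ hμ1] at h
  rw [F1v μ hμ1] at h
  rw [h]; try ring

lemma F3v (hμ1 : μ 1 = 1) : fA μ 3 5 = 5 / 3 * (fA μ 2 5 + (sigmaA μ 2 : ℝ) * 5 + (sigmaA μ 3 : ℝ)) := by
  have h := fA_succ μ 2 5
  norm_num [Finset.sum_range_succ, fA_zero, sig1 μ hμ1] at h
  rw [F1v μ hμ1] at h
  rw [h]; try ring

lemma F4v (hμ1 : μ 1 = 1) : fA μ 4 5 = 5 / 4 * (fA μ 3 5 + (sigmaA μ 2 : ℝ) * fA μ 2 5 + (sigmaA μ 3 : ℝ) * 5 + (sigmaA μ 4 : ℝ)) := by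
  have h := fA_succ μ 3 5
  norm_num [Finset.sum_range_succ, fA_zero, sig1 μ hμ1] at h
  rw [F1v μ hμ1] at h
  rw [h]; try ring

lemma F5v (hμ1 : μ 1 = 1) : fA μ 5 5 = fA μ 4 5 + (sigmaA μ 2 : ℝ) * fA μ 3 5 + (sigmaA μ 3 : ℝ) * fA μ 2 5 + (sigmaA μ 4 : ℝ) * 5 + (sigmaA μ 5 : ℝ) := by
  have h := fA_succ μ 4 5
  norm_num [Finset.sum_range_succ, fA_zero, sig1 μ hμ1] at h
  rw [F1v μ hμ1] at h
  rw [h]; try ring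

lemma F6v (hμ1 : μ 1 = 1) : fA μ 6 5 = 5 / 6 * (fA μ 5 5 + (sigmaA μ 2 : ℝ) * fA μ 4 5 + (sigmaA μ 3 : ℝ) * fA μ 3 5 + (sigmaA μ 4 : ℝ) * fA μ 2 5 + (sigmaA μ 5 : ℝ) * 5 + (sigmaA μ 6 : ℝ)) := by
  have h := fA_succ μ 5 5
  norm_num [Finset.sum_range_succ, fA_zero, sig1 μ hμ1] at h
  rw [F1v μ hμ1] at h
  rw [h]; try ring

end small

lemma sig_lt_F_of (μ : ℕ → ℕ) (hμ1 : μ 1 = 1) (hμ : ∀ j, μ j ≤ j) (m b c : ℕ)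
    (hc : ∑ d ∈ Nat.divisors m, d * d = c) (h : (c:ℝ) < SL b) :
    (sigmaA μ m : ℝ) < fA μ b 5 :=
  lt_of_le_of_lt (sigma_num μ hμ m c hc) (lt_of_lt_of_le h (fA_ge_SL μ hμ1 b))

lemma sig_lt_small (μ : ℕ → ℕ) (hμ1 : μ 1 = 1) (hμ : ∀ j, μ j ≤ j) (b : ℕ) (hb2 : 2 ≤ b) (hb8 : b ≤ 8) :
    ∀ m, b < m → m ≤ 2*b → (m = 2*b → 7 ≤ b) → (sigmaA μ m : ℝ) < fA μ b 5 := by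
  intro m h1 h2 h3
  interval_cases b <;> interval_cases m
  · exact sig_lt_F_of μ hμ1 hμ 3 2 10 (by decide) (by norm_num [SL])
  · exact absurd (h3 rfl) (by norm_num)
  · exact sig_lt_F_of μ hμ1 hμ 4 3 21 (by decide) (by norm_num [SL])
  · exact sig_lt_F_of μ hμ1 hμ 5 3 26 (by decide) (by norm_num [SL])
  · exact absurd (h3 rfl) (by norm_num)
  · exact sig_lt_F_of μ hμ1 hμ 5 4 26 (by decide) (by norm_num [SL])
  · exact sig_lt_F_of μ hμ1 hμ 6 4 50 (by decide) (by norm_num [SL])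
  · exact sig_lt_F_of μ hμ1 hμ 7 4 50 (by decide) (by norm_num [SL])
  · exact absurd (h3 rfl) (by norm_num)
  · exact sig_lt_F_of μ hμ1 hμ 6 5 50 (by decide) (by norm_num [SL])
  · exact sig_lt_F_of μ hμ1 hμ 7 5 50 (by decide) (by norm_num [SL])
  · exact sig_lt_F_of μ hμ1 hμ 8 5 85 (by decide) (by norm_num [SL])
  · exact sig_lt_F_of μ hμ1 hμ 9 5 91 (by decide) (by norm_num [SL])
  · exact absurd (h3 rfl) (by norm_num)
  · exact sig_lt_F_of μ hμ1 hμ 7 6 50 (by decide) (by norm_num [SL])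
  · exact sig_lt_F_of μ hμ1 hμ 8 6 85 (by decide) (by norm_num [SL])
  · exact sig_lt_F_of μ hμ1 hμ 9 6 91 (by decide) (by norm_num [SL])
  · exact sig_lt_F_of μ hμ1 hμ 10 6 130 (by decide) (by norm_num [SL])
  · exact sig_lt_F_of μ hμ1 hμ 11 6 122 (by decide) (by norm_num [SL])
  · exact absurd (h3 rfl) (by norm_num)
  · exact sig_lt_F_of μ hμ1 hμ 8 7 85 (by decide) (by norm_num [SL])
  · exact sig_lt_F_of μ hμ1 hμ 9 7 91 (by decide) (by norm_num [SL])
  · exact sig_lt_F_of μ hμ1 hμ 10 7 130 (by decide) (by norm_num [SL])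
  · exact sig_lt_F_of μ hμ1 hμ 11 7 122 (by decide) (by norm_num [SL])
  · exact sig_lt_F_of μ hμ1 hμ 12 7 210 (by decide) (by norm_num [SL])
  · exact sig_lt_F_of μ hμ1 hμ 13 7 170 (by decide) (by norm_num [SL])
  · exact sig_lt_F_of μ hμ1 hμ 14 7 250 (by decide) (by norm_num [SL])
  · exact sig_lt_F_of μ hμ1 hμ 9 8 91 (by decide) (by norm_num [SL])
  · exact sig_lt_F_of μ hμ1 hμ 10 8 130 (by decide) (by norm_num [SL])
  · exact sig_lt_F_of μ hμ1 hμ 11 8 122 (by decide) (by norm_num [SL])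
  · exact sig_lt_F_of μ hμ1 hμ 12 8 210 (by decide) (by norm_num [SL])
  · exact sig_lt_F_of μ hμ1 hμ 13 8 170 (by decide) (by norm_num [SL])
  · exact sig_lt_F_of μ hμ1 hμ 14 8 250 (by decide) (by norm_num [SL])
  · exact sig_lt_F_of μ hμ1 hμ 15 8 260 (by decide) (by norm_num [SL])
  · exact sig_lt_F_of μ hμ1 hμ 16 8 341 (by decide) (by norm_num [SL])

lemma sig_lt_big (μ : ℕ → ℕ) (hμ1 : μ 1 = 1) (hμ : ∀ j, μ j ≤ j) (a b : ℕ) (h9 : 9 ≤ b) (hab : a ≤ b) :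
    ∀ m, b < m → m ≤ a + b → (sigmaA μ m : ℝ) < fA μ b 5 := by
  intro m h1 h2
  have hm1 : 1 ≤ m := by omega
  have h2b : m ≤ 2*b := by omega
  have c1 := sigma_le_two_sq μ hμ m hm1
  have c2 : (m:ℝ) ≤ 2*(b:ℝ) := by exact_mod_cast h2b
  have c3 : 2*(m:ℝ)^2 ≤ 8*(b:ℝ)^2 := by nlinarith [Nat.cast_nonneg (α := ℝ) m]
  have c4 := SL_gt_8sq b h9
  have c5 := fA_ge_SL μ hμ1 b
  linarith

lemma diag2 (μ : ℕ → ℕ) (hμ1 : μ 1 = 1) (hμ : ∀ j, μ j ≤ j) :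
    5 * ∑ i ∈ Finset.range 2, (sigmaA μ (2 + 2 - i) : ℝ) * fA μ i 5 < (2:ℝ) * fA μ 2 5 * fA μ 2 5 := by
  have hs3u : (sigmaA μ 3:ℝ) ≤ 10 := sigma_num μ hμ 3 10 (by decide)
  have hs4u : (sigmaA μ 4:ℝ) ≤ 21 := sigma_num μ hμ 4 21 (by decide)
  have hF2l : (15:ℝ) ≤ fA μ 2 5 := le_trans (by norm_num [SL]) (fA_ge_SL μ hμ1 2)
  have hsq : (15:ℝ) * 15 ≤ fA μ 2 5 * fA μ 2 5 :=
    mul_le_mul hF2l hF2l (by norm_num) (le_trans (by norm_num) hF2l)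
  rw [Finset.sum_range_succ, Finset.sum_range_succ, Finset.sum_range_zero]
  norm_num [fA_zero, F1v μ hμ1]
  linarith

lemma diag3 (μ : ℕ → ℕ) (hμ1 : μ 1 = 1) (hμ : ∀ j, μ j ≤ j) :
    5 * ∑ i ∈ Finset.range 3, (sigmaA μ (3 + 3 - i) : ℝ) * fA μ i 5 < (3:ℝ) * fA μ 3 5 * fA μ 3 5 := by
  have hs4u : (sigmaA μ 4:ℝ) ≤ 21 := sigma_num μ hμ 4 21 (by decide)
  have hs5u : (sigmaA μ 5:ℝ) ≤ 26 := sigma_num μ hμ 5 26 (by decide)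
  have hs6u : (sigmaA μ 6:ℝ) ≤ 50 := sigma_num μ hμ 6 50 (by decide)
  have hF2u : fA μ 2 5 ≤ 25 := by
    have e2 := sig2e μ
    rw [hμ1] at e2
    have h2 : sigmaA μ 2 ≤ 5 := by have := hμ 2; omega
    have h2' : (sigmaA μ 2:ℝ) ≤ 5 := by exact_mod_cast h2
    rw [F2v μ hμ1]
    linarith
  have hF2nn : (0:ℝ) ≤ fA μ 2 5 := (fA_pos μ hμ1 2).le
  have hF3l : (35:ℝ) ≤ fA μ 3 5 := le_trans (by norm_num [SL]) (fA_ge_SL μ hμ1 3)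
  have hsq : (35:ℝ) * 35 ≤ fA μ 3 5 * fA μ 3 5 :=
    mul_le_mul hF3l hF3l (by norm_num) (le_trans (by norm_num) hF3l)
  have hq1 : (sigmaA μ 4:ℝ) * fA μ 2 5 ≤ 21 * 25 := mul_le_mul hs4u hF2u hF2nn (by norm_num)
  rw [Finset.sum_range_succ, Finset.sum_range_succ, Finset.sum_range_succ, Finset.sum_range_zero]
  norm_num [fA_zero, F1v μ hμ1]
  linarith
set_option maxHeartbeats 1000000 in
lemma diag4 (μ : ℕ → ℕ) (hμ1 : μ 1 = 1) (hμ : ∀ j, μ j ≤ j) :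
    5 * ∑ i ∈ Finset.range 4, (sigmaA μ (4 + 4 - i) : ℝ) * fA μ i 5 < (4:ℝ) * fA μ 4 5 * fA μ 4 5 := by
  have hm2 := hμ 2
  have hm3 := hμ 3
  have hm4 := hμ 4
  have hm5 := hμ 5
  have hm6 := hμ 6
  have hm8 := hμ 8
  have hm10 := hμ 10
  have hm12 := hμ 12
  have e2 := sig2e μ
  have e4 := sig4e μ
  have e6 := sig6e μ
  have e8 := sig8e μ
  have e10 := sig10e μ
  have e12 := sig12e μ
  rw [hμ1] at e2 e4 e6 e8 e10 e12
  have hs3u : (sigmaA μ 3:ℝ) ≤ 10 := sigma_num μ hμ 3 10 (by decide)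
  have hs5u : (sigmaA μ 5:ℝ) ≤ 26 := sigma_num μ hμ 5 26 (by decide)
  have hs7u : (sigmaA μ 7:ℝ) ≤ 50 := sigma_num μ hμ 7 50 (by decide)
  have hs9u : (sigmaA μ 9:ℝ) ≤ 91 := sigma_num μ hμ 9 91 (by decide)
  have hs11u : (sigmaA μ 11:ℝ) ≤ 122 := sigma_num μ hμ 11 122 (by decide)
  have hs3l : (1:ℝ) ≤ (sigmaA μ 3:ℝ) := sigma_ge_one' μ hμ1 3 (by norm_num)
  have hs5l : (1:ℝ) ≤ (sigmaA μ 5:ℝ) := sigma_ge_one' μ hμ1 5 (by norm_num)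
  have hF2nn : (0:ℝ) ≤ fA μ 2 5 := (fA_pos μ hμ1 2).le
  have hF3nn : (0:ℝ) ≤ fA μ 3 5 := (fA_pos μ hμ1 3).le
  have hF4nn : (0:ℝ) ≤ fA μ 4 5 := (fA_pos μ hμ1 4).le
  have hF5nn : (0:ℝ) ≤ fA μ 5 5 := (fA_pos μ hμ1 5).le
  have h2F := F2v μ hμ1
  have h3F := F3v μ hμ1
  have h4F := F4v μ hμ1
  have h5F := F5v μ hμ1
  have h6F := F6v μ hμ1
  have hc : μ 2 = 0 ∨ μ 2 = 1 ∨ μ 2 = 2 := by omega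
  rw [show (4:ℕ) + 4 = 8 from rfl]
  rw [Finset.sum_range_succ, Finset.sum_range_succ, Finset.sum_range_succ, Finset.sum_range_succ, Finset.sum_range_zero]
  norm_num [fA_zero, F1v μ hμ1]
  rcases hc with h2 | h2 | h2
  · have hs2v : (sigmaA μ 2:ℝ) = 1 := by
      have : sigmaA μ 2 = 1 := by omega
      exact_mod_cast this
    have hs4u2 : (sigmaA μ 4:ℝ) ≤ 17 := by
      have : sigmaA μ 4 ≤ 17 := by omega
      exact_mod_cast this
    have hs4l : (1:ℝ) ≤ (sigmaA μ 4:ℝ) := by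
      have : 1 ≤ sigmaA μ 4 := by omega
      exact_mod_cast this
    have hs6u2 : (sigmaA μ 6:ℝ) ≤ 46 := by
      have : sigmaA μ 6 ≤ 46 := by omega
      exact_mod_cast this
    have hs6l : (1:ℝ) ≤ (sigmaA μ 6:ℝ) := by
      have : 1 ≤ sigmaA μ 6 := by omega
      exact_mod_cast this
    have hs8u2 : (sigmaA μ 8:ℝ) ≤ 81 := by
      have : sigmaA μ 8 ≤ 81 := by omega
      exact_mod_cast this
    have hF2 : fA μ 2 5 = 15 := by rw [h2F, hs2v]; norm_num
    have hF3l : (35:ℝ) ≤ fA μ 3 5 := by rw [h3F, hF2, hs2v]; linarith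
    have hF3u : fA μ 3 5 ≤ 50 := by rw [h3F, hF2, hs2v]; linarith
    have hF4l : (70:ℝ) ≤ fA μ 4 5 := by rw [h4F, hF2, hs2v]; linarith
    have hF4u : fA μ 4 5 ≤ 165 := by rw [h4F, hF2, hs2v]; linarith
    rw [hF2]
    have hq1 : (sigmaA μ 5:ℝ) * fA μ 3 5 ≤ 26 * 50 := mul_le_mul hs5u hF3u hF3nn (by norm_num)
    have hsq : (70:ℝ) * 70 ≤ fA μ 4 5 * fA μ 4 5 :=
      mul_le_mul hF4l hF4l (by norm_num) (le_trans (by norm_num) hF4l)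
    linarith
  · have hs2v : (sigmaA μ 2:ℝ) = 3 := by
      have : sigmaA μ 2 = 3 := by omega
      exact_mod_cast this
    have hs4u2 : (sigmaA μ 4:ℝ) ≤ 19 := by
      have : sigmaA μ 4 ≤ 19 := by omega
      exact_mod_cast this
    have hs4l : (3:ℝ) ≤ (sigmaA μ 4:ℝ) := by
      have : 3 ≤ sigmaA μ 4 := by omega
      exact_mod_cast this
    have hs6u2 : (sigmaA μ 6:ℝ) ≤ 48 := by
      have : sigmaA μ 6 ≤ 48 := by omega
      exact_mod_cast this
    have hs6l : (3:ℝ) ≤ (sigmaA μ 6:ℝ) := by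
      have : 3 ≤ sigmaA μ 6 := by omega
      exact_mod_cast this
    have hs8u2 : (sigmaA μ 8:ℝ) ≤ 83 := by
      have : sigmaA μ 8 ≤ 83 := by omega
      exact_mod_cast this
    have hF2 : fA μ 2 5 = 20 := by rw [h2F, hs2v]; norm_num
    have hF3l : (60:ℝ) ≤ fA μ 3 5 := by rw [h3F, hF2, hs2v]; linarith
    have hF3u : fA μ 3 5 ≤ 75 := by rw [h3F, hF2, hs2v]; linarith
    have hF4l : (160:ℝ) ≤ fA μ 4 5 := by rw [h4F, hF2, hs2v]; linarith
    have hF4u : fA μ 4 5 ≤ 255 := by rw [h4F, hF2, hs2v]; linarith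
    rw [hF2]
    have hq1 : (sigmaA μ 5:ℝ) * fA μ 3 5 ≤ 26 * 75 := mul_le_mul hs5u hF3u hF3nn (by norm_num)
    have hsq : (160:ℝ) * 160 ≤ fA μ 4 5 * fA μ 4 5 :=
      mul_le_mul hF4l hF4l (by norm_num) (le_trans (by norm_num) hF4l)
    linarith
  · have hs2v : (sigmaA μ 2:ℝ) = 5 := by
      have : sigmaA μ 2 = 5 := by omega
      exact_mod_cast this
    have hs4u2 : (sigmaA μ 4:ℝ) ≤ 21 := by
      have : sigmaA μ 4 ≤ 21 := by omega
      exact_mod_cast this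
    have hs4l : (5:ℝ) ≤ (sigmaA μ 4:ℝ) := by
      have : 5 ≤ sigmaA μ 4 := by omega
      exact_mod_cast this
    have hs6u2 : (sigmaA μ 6:ℝ) ≤ 50 := by
      have : sigmaA μ 6 ≤ 50 := by omega
      exact_mod_cast this
    have hs6l : (5:ℝ) ≤ (sigmaA μ 6:ℝ) := by
      have : 5 ≤ sigmaA μ 6 := by omega
      exact_mod_cast this
    have hs8u2 : (sigmaA μ 8:ℝ) ≤ 85 := by
      have : sigmaA μ 8 ≤ 85 := by omega
      exact_mod_cast this
    have hF2 : fA μ 2 5 = 25 := by rw [h2F, hs2v]; norm_num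
    have hF3l : (85:ℝ) ≤ fA μ 3 5 := by rw [h3F, hF2, hs2v]; linarith
    have hF3u : fA μ 3 5 ≤ 100 := by rw [h3F, hF2, hs2v]; linarith
    have hF4l : (275:ℝ) ≤ fA μ 4 5 := by rw [h4F, hF2, hs2v]; linarith
    have hF4u : fA μ 4 5 ≤ 370 := by rw [h4F, hF2, hs2v]; linarith
    rw [hF2]
    have hq1 : (sigmaA μ 5:ℝ) * fA μ 3 5 ≤ 26 * 100 := mul_le_mul hs5u hF3u hF3nn (by norm_num)
    have hsq : (275:ℝ) * 275 ≤ fA μ 4 5 * fA μ 4 5 :=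
      mul_le_mul hF4l hF4l (by norm_num) (le_trans (by norm_num) hF4l)
    linarith
set_option maxHeartbeats 1000000 in
lemma diag5 (μ : ℕ → ℕ) (hμ1 : μ 1 = 1) (hμ : ∀ j, μ j ≤ j) :
    5 * ∑ i ∈ Finset.range 5, (sigmaA μ (5 + 5 - i) : ℝ) * fA μ i 5 < (5:ℝ) * fA μ 5 5 * fA μ 5 5 := by
  have hm2 := hμ 2
  have hm3 := hμ 3
  have hm4 := hμ 4
  have hm5 := hμ 5
  have hm6 := hμ 6
  have hm8 := hμ 8
  have hm10 := hμ 10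
  have hm12 := hμ 12
  have e2 := sig2e μ
  have e4 := sig4e μ
  have e6 := sig6e μ
  have e8 := sig8e μ
  have e10 := sig10e μ
  have e12 := sig12e μ
  rw [hμ1] at e2 e4 e6 e8 e10 e12
  have hs3u : (sigmaA μ 3:ℝ) ≤ 10 := sigma_num μ hμ 3 10 (by decide)
  have hs5u : (sigmaA μ 5:ℝ) ≤ 26 := sigma_num μ hμ 5 26 (by decide)
  have hs7u : (sigmaA μ 7:ℝ) ≤ 50 := sigma_num μ hμ 7 50 (by decide)
  have hs9u : (sigmaA μ 9:ℝ) ≤ 91 := sigma_num μ hμ 9 91 (by decide)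
  have hs11u : (sigmaA μ 11:ℝ) ≤ 122 := sigma_num μ hμ 11 122 (by decide)
  have hs3l : (1:ℝ) ≤ (sigmaA μ 3:ℝ) := sigma_ge_one' μ hμ1 3 (by norm_num)
  have hs5l : (1:ℝ) ≤ (sigmaA μ 5:ℝ) := sigma_ge_one' μ hμ1 5 (by norm_num)
  have hF2nn : (0:ℝ) ≤ fA μ 2 5 := (fA_pos μ hμ1 2).le
  have hF3nn : (0:ℝ) ≤ fA μ 3 5 := (fA_pos μ hμ1 3).le
  have hF4nn : (0:ℝ) ≤ fA μ 4 5 := (fA_pos μ hμ1 4).le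
  have hF5nn : (0:ℝ) ≤ fA μ 5 5 := (fA_pos μ hμ1 5).le
  have h2F := F2v μ hμ1
  have h3F := F3v μ hμ1
  have h4F := F4v μ hμ1
  have h5F := F5v μ hμ1
  have h6F := F6v μ hμ1
  have hc : μ 2 = 0 ∨ μ 2 = 1 ∨ μ 2 = 2 := by omega
  rw [show (5:ℕ) + 5 = 10 from rfl]
  rw [Finset.sum_range_succ, Finset.sum_range_succ, Finset.sum_range_succ, Finset.sum_range_succ, Finset.sum_range_succ, Finset.sum_range_zero]
  norm_num [fA_zero, F1v μ hμ1]
  rcases hc with h2 | h2 | h2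
  · have hs2v : (sigmaA μ 2:ℝ) = 1 := by
      have : sigmaA μ 2 = 1 := by omega
      exact_mod_cast this
    have hs4u2 : (sigmaA μ 4:ℝ) ≤ 17 := by
      have : sigmaA μ 4 ≤ 17 := by omega
      exact_mod_cast this
    have hs4l : (1:ℝ) ≤ (sigmaA μ 4:ℝ) := by
      have : 1 ≤ sigmaA μ 4 := by omega
      exact_mod_cast this
    have hs6u2 : (sigmaA μ 6:ℝ) ≤ 46 := by
      have : sigmaA μ 6 ≤ 46 := by omega
      exact_mod_cast this
    have hs6l : (1:ℝ) ≤ (sigmaA μ 6:ℝ) := by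
      have : 1 ≤ sigmaA μ 6 := by omega
      exact_mod_cast this
    have hs8u2 : (sigmaA μ 8:ℝ) ≤ 81 := by
      have : sigmaA μ 8 ≤ 81 := by omega
      exact_mod_cast this
    have hs10u2 : (sigmaA μ 10:ℝ) ≤ 126 := by
      have : sigmaA μ 10 ≤ 126 := by omega
      exact_mod_cast this
    have hF2 : fA μ 2 5 = 15 := by rw [h2F, hs2v]; norm_num
    have hF3l : (35:ℝ) ≤ fA μ 3 5 := by rw [h3F, hF2, hs2v]; linarith
    have hF3u : fA μ 3 5 ≤ 50 := by rw [h3F, hF2, hs2v]; linarith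
    have hF4l : (70:ℝ) ≤ fA μ 4 5 := by rw [h4F, hF2, hs2v]; linarith
    have hF4u : fA μ 4 5 ≤ 165 := by rw [h4F, hF2, hs2v]; linarith
    have hF5l : (126:ℝ) ≤ fA μ 5 5 := by rw [h5F, hF2, hs2v]; linarith
    have hF5u : fA μ 5 5 ≤ 476 := by rw [h5F, hF2, hs2v]; linarith
    rw [hF2]
    have hq1 : (sigmaA μ 7:ℝ) * fA μ 3 5 ≤ 50 * 50 := mul_le_mul hs7u hF3u hF3nn (by norm_num)
    have hq2 : (sigmaA μ 6:ℝ) * fA μ 4 5 ≤ 46 * 165 := mul_le_mul hs6u2 hF4u hF4nn (by norm_num)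
    have hsq : (126:ℝ) * 126 ≤ fA μ 5 5 * fA μ 5 5 :=
      mul_le_mul hF5l hF5l (by norm_num) (le_trans (by norm_num) hF5l)
    linarith
  · have hs2v : (sigmaA μ 2:ℝ) = 3 := by
      have : sigmaA μ 2 = 3 := by omega
      exact_mod_cast this
    have hs4u2 : (sigmaA μ 4:ℝ) ≤ 19 := by
      have : sigmaA μ 4 ≤ 19 := by omega
      exact_mod_cast this
    have hs4l : (3:ℝ) ≤ (sigmaA μ 4:ℝ) := by
      have : 3 ≤ sigmaA μ 4 := by omega
      exact_mod_cast this
    have hs6u2 : (sigmaA μ 6:ℝ) ≤ 48 := by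
      have : sigmaA μ 6 ≤ 48 := by omega
      exact_mod_cast this
    have hs6l : (3:ℝ) ≤ (sigmaA μ 6:ℝ) := by
      have : 3 ≤ sigmaA μ 6 := by omega
      exact_mod_cast this
    have hs8u2 : (sigmaA μ 8:ℝ) ≤ 83 := by
      have : sigmaA μ 8 ≤ 83 := by omega
      exact_mod_cast this
    have hs10u2 : (sigmaA μ 10:ℝ) ≤ 128 := by
      have : sigmaA μ 10 ≤ 128 := by omega
      exact_mod_cast this
    have hF2 : fA μ 2 5 = 20 := by rw [h2F, hs2v]; norm_num
    have hF3l : (60:ℝ) ≤ fA μ 3 5 := by rw [h3F, hF2, hs2v]; linarith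
    have hF3u : fA μ 3 5 ≤ 75 := by rw [h3F, hF2, hs2v]; linarith
    have hF4l : (160:ℝ) ≤ fA μ 4 5 := by rw [h4F, hF2, hs2v]; linarith
    have hF4u : fA μ 4 5 ≤ 255 := by rw [h4F, hF2, hs2v]; linarith
    have hF5l : (376:ℝ) ≤ fA μ 5 5 := by rw [h5F, hF2, hs2v]; linarith
    have hF5u : fA μ 5 5 ≤ 801 := by rw [h5F, hF2, hs2v]; linarith
    rw [hF2]
    have hq1 : (sigmaA μ 7:ℝ) * fA μ 3 5 ≤ 50 * 75 := mul_le_mul hs7u hF3u hF3nn (by norm_num)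
    have hq2 : (sigmaA μ 6:ℝ) * fA μ 4 5 ≤ 48 * 255 := mul_le_mul hs6u2 hF4u hF4nn (by norm_num)
    have hsq : (376:ℝ) * 376 ≤ fA μ 5 5 * fA μ 5 5 :=
      mul_le_mul hF5l hF5l (by norm_num) (le_trans (by norm_num) hF5l)
    linarith
  · have hs2v : (sigmaA μ 2:ℝ) = 5 := by
      have : sigmaA μ 2 = 5 := by omega
      exact_mod_cast this
    have hs4u2 : (sigmaA μ 4:ℝ) ≤ 21 := by
      have : sigmaA μ 4 ≤ 21 := by omega
      exact_mod_cast this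
    have hs4l : (5:ℝ) ≤ (sigmaA μ 4:ℝ) := by
      have : 5 ≤ sigmaA μ 4 := by omega
      exact_mod_cast this
    have hs6u2 : (sigmaA μ 6:ℝ) ≤ 50 := by
      have : sigmaA μ 6 ≤ 50 := by omega
      exact_mod_cast this
    have hs6l : (5:ℝ) ≤ (sigmaA μ 6:ℝ) := by
      have : 5 ≤ sigmaA μ 6 := by omega
      exact_mod_cast this
    have hs8u2 : (sigmaA μ 8:ℝ) ≤ 85 := by
      have : sigmaA μ 8 ≤ 85 := by omega
      exact_mod_cast this
    have hs10u2 : (sigmaA μ 10:ℝ) ≤ 130 := by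
      have : sigmaA μ 10 ≤ 130 := by omega
      exact_mod_cast this
    have hF2 : fA μ 2 5 = 25 := by rw [h2F, hs2v]; norm_num
    have hF3l : (85:ℝ) ≤ fA μ 3 5 := by rw [h3F, hF2, hs2v]; linarith
    have hF3u : fA μ 3 5 ≤ 100 := by rw [h3F, hF2, hs2v]; linarith
    have hF4l : (275:ℝ) ≤ fA μ 4 5 := by rw [h4F, hF2, hs2v]; linarith
    have hF4u : fA μ 4 5 ≤ 370 := by rw [h4F, hF2, hs2v]; linarith
    have hF5l : (751:ℝ) ≤ fA μ 5 5 := by rw [h5F, hF2, hs2v]; linarith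
    have hF5u : fA μ 5 5 ≤ 1251 := by rw [h5F, hF2, hs2v]; linarith
    rw [hF2]
    have hq1 : (sigmaA μ 7:ℝ) * fA μ 3 5 ≤ 50 * 100 := mul_le_mul hs7u hF3u hF3nn (by norm_num)
    have hq2 : (sigmaA μ 6:ℝ) * fA μ 4 5 ≤ 50 * 370 := mul_le_mul hs6u2 hF4u hF4nn (by norm_num)
    have hsq : (751:ℝ) * 751 ≤ fA μ 5 5 * fA μ 5 5 :=
      mul_le_mul hF5l hF5l (by norm_num) (le_trans (by norm_num) hF5l)
    linarith
set_option maxHeartbeats 1600000 in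
lemma diag6 (μ : ℕ → ℕ) (hμ1 : μ 1 = 1) (hμ : ∀ j, μ j ≤ j) :
    5 * ∑ i ∈ Finset.range 6, (sigmaA μ (6 + 6 - i) : ℝ) * fA μ i 5 < (6:ℝ) * fA μ 6 5 * fA μ 6 5 := by
  have hm2 := hμ 2
  have hm3 := hμ 3
  have hm4 := hμ 4
  have hm5 := hμ 5
  have hm6 := hμ 6
  have hm8 := hμ 8
  have hm10 := hμ 10
  have hm12 := hμ 12
  have e2 := sig2e μ
  have e4 := sig4e μ
  have e6 := sig6e μ
  have e8 := sig8e μ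
  have e10 := sig10e μ
  have e12 := sig12e μ
  rw [hμ1] at e2 e4 e6 e8 e10 e12
  have hs3u : (sigmaA μ 3:ℝ) ≤ 10 := sigma_num μ hμ 3 10 (by decide)
  have hs5u : (sigmaA μ 5:ℝ) ≤ 26 := sigma_num μ hμ 5 26 (by decide)
  have hs7u : (sigmaA μ 7:ℝ) ≤ 50 := sigma_num μ hμ 7 50 (by decide)
  have hs9u : (sigmaA μ 9:ℝ) ≤ 91 := sigma_num μ hμ 9 91 (by decide)
  have hs11u : (sigmaA μ 11:ℝ) ≤ 122 := sigma_num μ hμ 11 122 (by decide)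
  have hs3l : (1:ℝ) ≤ (sigmaA μ 3:ℝ) := sigma_ge_one' μ hμ1 3 (by norm_num)
  have hs5l : (1:ℝ) ≤ (sigmaA μ 5:ℝ) := sigma_ge_one' μ hμ1 5 (by norm_num)
  have hF2nn : (0:ℝ) ≤ fA μ 2 5 := (fA_pos μ hμ1 2).le
  have hF3nn : (0:ℝ) ≤ fA μ 3 5 := (fA_pos μ hμ1 3).le
  have hF4nn : (0:ℝ) ≤ fA μ 4 5 := (fA_pos μ hμ1 4).le
  have hF5nn : (0:ℝ) ≤ fA μ 5 5 := (fA_pos μ hμ1 5).le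
  have h2F := F2v μ hμ1
  have h3F := F3v μ hμ1
  have h4F := F4v μ hμ1
  have h5F := F5v μ hμ1
  have h6F := F6v μ hμ1
  have hc : μ 2 = 0 ∨ μ 2 = 1 ∨ μ 2 = 2 := by omega
  rw [show (6:ℕ) + 6 = 12 from rfl]
  rw [Finset.sum_range_succ, Finset.sum_range_succ, Finset.sum_range_succ, Finset.sum_range_succ, Finset.sum_range_succ, Finset.sum_range_succ, Finset.sum_range_zero]
  norm_num [fA_zero, F1v μ hμ1]
  rcases hc with h2 | h2 | h2
  · have hs2v : (sigmaA μ 2:ℝ) = 1 := by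
      have : sigmaA μ 2 = 1 := by omega
      exact_mod_cast this
    have hs4u2 : (sigmaA μ 4:ℝ) ≤ 17 := by
      have : sigmaA μ 4 ≤ 17 := by omega
      exact_mod_cast this
    have hs4l : (1:ℝ) ≤ (sigmaA μ 4:ℝ) := by
      have : 1 ≤ sigmaA μ 4 := by omega
      exact_mod_cast this
    have hs6u2 : (sigmaA μ 6:ℝ) ≤ 46 := by
      have : sigmaA μ 6 ≤ 46 := by omega
      exact_mod_cast this
    have hs6l : (1:ℝ) ≤ (sigmaA μ 6:ℝ) := by
      have : 1 ≤ sigmaA μ 6 := by omega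
      exact_mod_cast this
    have hs8u2 : (sigmaA μ 8:ℝ) ≤ 81 := by
      have : sigmaA μ 8 ≤ 81 := by omega
      exact_mod_cast this
    have hs10u2 : (sigmaA μ 10:ℝ) ≤ 126 := by
      have : sigmaA μ 10 ≤ 126 := by omega
      exact_mod_cast this
    have hs12u2 : (sigmaA μ 12:ℝ) ≤ 206 := by
      have : sigmaA μ 12 ≤ 206 := by omega
      exact_mod_cast this
    have hF2 : fA μ 2 5 = 15 := by rw [h2F, hs2v]; norm_num
    have hF3l : (35:ℝ) ≤ fA μ 3 5 := by rw [h3F, hF2, hs2v]; linarith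
    have hF3u : fA μ 3 5 ≤ 50 := by rw [h3F, hF2, hs2v]; linarith
    have hF4l : (70:ℝ) ≤ fA μ 4 5 := by rw [h4F, hF2, hs2v]; linarith
    have hF4u : fA μ 4 5 ≤ 165 := by rw [h4F, hF2, hs2v]; linarith
    have hF5l : (126:ℝ) ≤ fA μ 5 5 := by rw [h5F, hF2, hs2v]; linarith
    have hF5u : fA μ 5 5 ≤ 476 := by rw [h5F, hF2, hs2v]; linarith
    have hp1 : 1 * fA μ 3 5 ≤ (sigmaA μ 3:ℝ) * fA μ 3 5 := mul_le_mul_of_nonneg_right hs3l hF3nn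
    have hF6l : (210:ℝ) ≤ fA μ 6 5 := by rw [h6F, hF2, hs2v]; linarith
    rw [hF2]
    have hq1 : (sigmaA μ 9:ℝ) * fA μ 3 5 ≤ 91 * 50 := mul_le_mul hs9u hF3u hF3nn (by norm_num)
    have hq2 : (sigmaA μ 8:ℝ) * fA μ 4 5 ≤ 81 * 165 := mul_le_mul hs8u2 hF4u hF4nn (by norm_num)
    have hq3 : (sigmaA μ 7:ℝ) * fA μ 5 5 ≤ 50 * 476 := mul_le_mul hs7u hF5u hF5nn (by norm_num)
    have hsq : (210:ℝ) * 210 ≤ fA μ 6 5 * fA μ 6 5 :=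
      mul_le_mul hF6l hF6l (by norm_num) (le_trans (by norm_num) hF6l)
    linarith
  · have hs2v : (sigmaA μ 2:ℝ) = 3 := by
      have : sigmaA μ 2 = 3 := by omega
      exact_mod_cast this
    have hs4u2 : (sigmaA μ 4:ℝ) ≤ 19 := by
      have : sigmaA μ 4 ≤ 19 := by omega
      exact_mod_cast this
    have hs4l : (3:ℝ) ≤ (sigmaA μ 4:ℝ) := by
      have : 3 ≤ sigmaA μ 4 := by omega
      exact_mod_cast this
    have hs6u2 : (sigmaA μ 6:ℝ) ≤ 48 := by
      have : sigmaA μ 6 ≤ 48 := by omega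
      exact_mod_cast this
    have hs6l : (3:ℝ) ≤ (sigmaA μ 6:ℝ) := by
      have : 3 ≤ sigmaA μ 6 := by omega
      exact_mod_cast this
    have hs8u2 : (sigmaA μ 8:ℝ) ≤ 83 := by
      have : sigmaA μ 8 ≤ 83 := by omega
      exact_mod_cast this
    have hs10u2 : (sigmaA μ 10:ℝ) ≤ 128 := by
      have : sigmaA μ 10 ≤ 128 := by omega
      exact_mod_cast this
    have hs12u2 : (sigmaA μ 12:ℝ) ≤ 208 := by
      have : sigmaA μ 12 ≤ 208 := by omega
      exact_mod_cast this
    have hF2 : fA μ 2 5 = 20 := by rw [h2F, hs2v]; norm_num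
    have hF3l : (60:ℝ) ≤ fA μ 3 5 := by rw [h3F, hF2, hs2v]; linarith
    have hF3u : fA μ 3 5 ≤ 75 := by rw [h3F, hF2, hs2v]; linarith
    have hF4l : (160:ℝ) ≤ fA μ 4 5 := by rw [h4F, hF2, hs2v]; linarith
    have hF4u : fA μ 4 5 ≤ 255 := by rw [h4F, hF2, hs2v]; linarith
    have hF5l : (376:ℝ) ≤ fA μ 5 5 := by rw [h5F, hF2, hs2v]; linarith
    have hF5u : fA μ 5 5 ≤ 801 := by rw [h5F, hF2, hs2v]; linarith
    have hp1 : 1 * fA μ 3 5 ≤ (sigmaA μ 3:ℝ) * fA μ 3 5 := mul_le_mul_of_nonneg_right hs3l hF3nn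
    have hF6l : (820:ℝ) ≤ fA μ 6 5 := by rw [h6F, hF2, hs2v]; linarith
    rw [hF2]
    have hq1 : (sigmaA μ 9:ℝ) * fA μ 3 5 ≤ 91 * 75 := mul_le_mul hs9u hF3u hF3nn (by norm_num)
    have hq2 : (sigmaA μ 8:ℝ) * fA μ 4 5 ≤ 83 * 255 := mul_le_mul hs8u2 hF4u hF4nn (by norm_num)
    have hq3 : (sigmaA μ 7:ℝ) * fA μ 5 5 ≤ 50 * 801 := mul_le_mul hs7u hF5u hF5nn (by norm_num)
    have hsq : (820:ℝ) * 820 ≤ fA μ 6 5 * fA μ 6 5 :=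
      mul_le_mul hF6l hF6l (by norm_num) (le_trans (by norm_num) hF6l)
    linarith
  · have hs2v : (sigmaA μ 2:ℝ) = 5 := by
      have : sigmaA μ 2 = 5 := by omega
      exact_mod_cast this
    have hs4u2 : (sigmaA μ 4:ℝ) ≤ 21 := by
      have : sigmaA μ 4 ≤ 21 := by omega
      exact_mod_cast this
    have hs4l : (5:ℝ) ≤ (sigmaA μ 4:ℝ) := by
      have : 5 ≤ sigmaA μ 4 := by omega
      exact_mod_cast this
    have hs6u2 : (sigmaA μ 6:ℝ) ≤ 50 := by
      have : sigmaA μ 6 ≤ 50 := by omega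
      exact_mod_cast this
    have hs6l : (5:ℝ) ≤ (sigmaA μ 6:ℝ) := by
      have : 5 ≤ sigmaA μ 6 := by omega
      exact_mod_cast this
    have hs8u2 : (sigmaA μ 8:ℝ) ≤ 85 := by
      have : sigmaA μ 8 ≤ 85 := by omega
      exact_mod_cast this
    have hs10u2 : (sigmaA μ 10:ℝ) ≤ 130 := by
      have : sigmaA μ 10 ≤ 130 := by omega
      exact_mod_cast this
    have hs12u2 : (sigmaA μ 12:ℝ) ≤ 210 := by
      have : sigmaA μ 12 ≤ 210 := by omega
      exact_mod_cast this
    have hF2 : fA μ 2 5 = 25 := by rw [h2F, hs2v]; norm_num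
    have hF3l : (85:ℝ) ≤ fA μ 3 5 := by rw [h3F, hF2, hs2v]; linarith
    have hF3u : fA μ 3 5 ≤ 100 := by rw [h3F, hF2, hs2v]; linarith
    have hF4l : (275:ℝ) ≤ fA μ 4 5 := by rw [h4F, hF2, hs2v]; linarith
    have hF4u : fA μ 4 5 ≤ 370 := by rw [h4F, hF2, hs2v]; linarith
    have hF5l : (751:ℝ) ≤ fA μ 5 5 := by rw [h5F, hF2, hs2v]; linarith
    have hF5u : fA μ 5 5 ≤ 1251 := by rw [h5F, hF2, hs2v]; linarith
    have hp1 : 1 * fA μ 3 5 ≤ (sigmaA μ 3:ℝ) * fA μ 3 5 := mul_le_mul_of_nonneg_right hs3l hF3nn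
    have hF6l : (1955:ℝ) ≤ fA μ 6 5 := by rw [h6F, hF2, hs2v]; linarith
    rw [hF2]
    have hq1 : (sigmaA μ 9:ℝ) * fA μ 3 5 ≤ 91 * 100 := mul_le_mul hs9u hF3u hF3nn (by norm_num)
    have hq2 : (sigmaA μ 8:ℝ) * fA μ 4 5 ≤ 85 * 370 := mul_le_mul hs8u2 hF4u hF4nn (by norm_num)
    have hq3 : (sigmaA μ 7:ℝ) * fA μ 5 5 ≤ 50 * 1251 := mul_le_mul hs7u hF5u hF5nn (by norm_num)
    have hsq : (1955:ℝ) * 1955 ≤ fA μ 6 5 * fA μ 6 5 :=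
      mul_le_mul hF6l hF6l (by norm_num) (le_trans (by norm_num) hF6l)
    linarith

lemma F11_ge (μ : ℕ → ℕ) (hμ1 : μ 1 = 1) (hμ : ∀ j, μ j ≤ j) :
    fA μ 1 5 * fA μ 1 5 ≥ fA μ 2 5 := by
  have e2 := sig2e μ
  rw [hμ1] at e2
  have h2 : sigmaA μ 2 ≤ 5 := by have := hμ 2; omega
  have h2' : (sigmaA μ 2:ℝ) ≤ 5 := by exact_mod_cast h2
  rw [F1v μ hμ1, F2v μ hμ1]
  linarith

lemma F11_eq_iff (μ : ℕ → ℕ) (hμ1 : μ 1 = 1) (hμ : ∀ j, μ j ≤ j) :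
    fA μ 1 5 * fA μ 1 5 = fA μ 2 5 ↔ μ 2 = 2 := by
  have e2 := sig2e μ
  rw [hμ1] at e2
  rw [F1v μ hμ1, F2v μ hμ1]
  constructor
  · intro h
    have h5 : (sigmaA μ 2:ℝ) = 5 := by linarith
    have h5' : sigmaA μ 2 = 5 := by exact_mod_cast h5
    omega
  · intro h
    have h5 : sigmaA μ 2 = 5 := by omega
    rw [h5]
    norm_num

lemma main_gt (μ : ℕ → ℕ) (hμ1 : μ 1 = 1) (hμ : ∀ j, μ j ≤ j) :
    ∀ n, ∀ a b : ℕ, 1 ≤ a → 1 ≤ b → a + b = n → 3 ≤ n → fA μ a 5 * fA μ b 5 > fA μ n 5 := by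
  intro n
  induction n using Nat.strong_induction_on with
  | _ n IH =>
    have core : ∀ a b : ℕ, 1 ≤ a → a ≤ b → a + b = n → 3 ≤ n → fA μ a 5 * fA μ b 5 > fA μ n 5 := by
      intro a b ha hab habn h3
      subst habn
      have hb : 1 ≤ b := by omega
      have hb2 : 2 ≤ b := by omega
      have hGE : ∀ k, k < b → fA μ a 5 * fA μ k 5 ≥ fA μ (a + k) 5 := by
        intro k hk
        rcases Nat.eq_zero_or_pos k with rfl | hk1
        · simp [fA_zero]
        · rcases eq_or_lt_of_le (show 2 ≤ a + k by omega) with h2 | h2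
          · have ha1 : a = 1 := by omega
            have hk1' : k = 1 := by omega
            subst ha1; subst hk1'
            exact F11_ge μ hμ1 hμ
          · exact (IH (a+k) (by omega) a k ha hk1 rfl (by omega)).le
      have htail : 5 * ∑ i ∈ Finset.range a, (sigmaA μ (a + b - i) : ℝ) * fA μ i 5
          < (a:ℝ) * fA μ a 5 * fA μ b 5 := by
        rcases Nat.lt_or_ge b 9 with hb9 | hb9
        · rcases Nat.lt_or_ge a b with hab' | hab'
          · exact tail_bound μ hμ1 a b ha
              (fun m h1 h2 => sig_lt_small μ hμ1 hμ b hb2 (by omega) m h1 (by omega) (by omega))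
          · have haeq : a = b := le_antisymm hab hab'
            subst haeq
            rcases Nat.lt_or_ge a 7 with h7 | h7
            · interval_cases a
              · exact_mod_cast diag2 μ hμ1 hμ
              · exact_mod_cast diag3 μ hμ1 hμ
              · exact_mod_cast diag4 μ hμ1 hμ
              · exact_mod_cast diag5 μ hμ1 hμ
              · exact_mod_cast diag6 μ hμ1 hμ
            · exact tail_bound μ hμ1 a a ha
                (fun m h1 h2 => sig_lt_small μ hμ1 hμ a (by omega) (by omega) m h1 (by omega)
                  (fun _ => by omega))
        · exact tail_bound μ hμ1 a b ha (sig_lt_big μ hμ1 hμ a b hb9 hab)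
      exact step μ hμ1 a b ha hb hGE htail
    intro a b ha hb habn h3
    rcases le_total a b with h | h
    · exact core a b ha h habn h3
    · rw [mul_comm]
      exact core b a hb h (by omega) h3

/-- Bessenrodt-Ono inequality at x = 5 for a multiset A of positive integers in which 1 occurs exactly once and each j occurs at most j times: f_{A,a}(5) f_{A,b}(5) > f_{A,a+b}(5) for a + b > 2, and f_{A,1}(5)^2 >= f_{A,2}(5) with equality iff 2 occurs exactly twice in A. -/
theorem stmt_16 (μ : ℕ → ℕ) (hμ1 : μ 1 = 1) (hμ : ∀ j, μ j ≤ j) :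
    (∀ a b : ℕ, 1 ≤ a → 1 ≤ b → 2 < a + b → fA μ a 5 * fA μ b 5 > fA μ (a + b) 5) ∧
    fA μ 1 5 * fA μ 1 5 ≥ fA μ 2 5 ∧
    (fA μ 1 5 * fA μ 1 5 = fA μ 2 5 ↔ μ 2 = 2) := by
  refine ⟨fun a b ha hb hab => main_gt μ hμ1 hμ (a+b) a b ha hb rfl (by omega),
    F11_ge μ hμ1 hμ, F11_eq_iff μ hμ1 hμ⟩
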